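/- Let m < 0 be an integer. If u : (0,∞) → ℂ is continuously differentiable with finite mass M[u] < ∞ and finite norm ‖u‖_{Ḣ¹_m} < ∞, and u solves the Bogomol'nyi equation ∂_r u(r) = ((m + A_θ[u](r))/r) u(r) for all r > 0, then u is identically zero. In particular, there is no nontrivial finite-energy Jackiw–Pi vortex with negative equivariance index. -/

import Mathlib

open MeasureTheory Set

/-- `A_θ[ψ](r) = -(1/2)∫₀^r |ψ(r')|² r' dr'`. -/
noncomputable def Atheta (ψ : ℝ → ℂ) (r : ℝ) : ℝ :=
  -(1/2) * ∫ t in (0:ℝ)..r, ‖ψ t‖ ^ 2 * t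

lemma Atheta_nonpos (ψ : ℝ → ℂ) (r : ℝ) (hr : 0 ≤ r) : Atheta ψ r ≤ 0 := by
  have h : 0 ≤ ∫ t in (0:ℝ)..r, ‖ψ t‖ ^ 2 * t := by
    apply intervalIntegral.integral_nonneg hr
    intro x hx
    exact mul_nonneg (by positivity) hx.1
  unfold Atheta
  nlinarith

/-- Nonexistence of nontrivial finite-energy Jackiw–Pi vortices with negative
equivariance index: if `m < 0`, `u` is `C¹` on `(0,∞)` with finite mass and finite
`Ḣ¹_m` norm, and `u` solves the Bogomol'nyi equation
`∂_r u = ((m + A_θ[u])/r) u` on `(0,∞)`, then `u ≡ 0` on `(0,∞)`. -/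
theorem no_vortex_neg_equiv (m : ℤ) (hm : m < 0) (u : ℝ → ℂ)
    (hcont : ContinuousOn u (Set.Ioi (0:ℝ)))
    (hderiv : ∀ r ∈ Set.Ioi (0:ℝ),
      HasDerivAt u (((((m : ℝ) + Atheta u r) / r : ℝ) : ℂ) * u r) r)
    (hmass : IntegrableOn (fun r => ‖u r‖ ^ 2 * r) (Set.Ioi (0:ℝ)))
    (hH1 : IntegrableOn
      (fun r => (‖deriv u r‖ ^ 2 + ((m : ℝ) ^ 2 / r ^ 2) * ‖u r‖ ^ 2) * r)
      (Set.Ioi (0:ℝ))) :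
    ∀ r ∈ Set.Ioi (0:ℝ), u r = 0 := by
  -- h(r) = r^2 ‖u r‖^2 is antitone on (0,∞)
  set h : ℝ → ℝ := fun r => r ^ 2 * ‖u r‖ ^ 2 with hh
  have hF : ∀ r ∈ Set.Ioi (0:ℝ),
      HasDerivAt (fun s => ‖u s‖ ^ 2)
        (2 * (((m : ℝ) + Atheta u r) / r) * ‖u r‖ ^ 2) r := by
    intro r hr
    set c : ℝ := ((m : ℝ) + Atheta u r) / r with hc
    have hu := hderiv r hr
    have ha : HasDerivAt (fun s => (u s).re) (((c : ℂ) * u r).re) r :=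
      (Complex.reCLM.hasFDerivAt.comp_hasDerivAt r hu)
    have hb : HasDerivAt (fun s => (u s).im) (((c : ℂ) * u r).im) r :=
      (Complex.imCLM.hasFDerivAt.comp_hasDerivAt r hu)
    have key : HasDerivAt (fun s => (u s).re ^ 2 + (u s).im ^ 2)
        (2 * (u r).re * ((c : ℂ) * u r).re + 2 * (u r).im * ((c : ℂ) * u r).im) r := by
      have h1 := (ha.pow 2)
      have h2 := (hb.pow 2)
      have := h1.add h2
      refine this.congr_deriv ?_
      push_cast
      ring
    have heq : (fun s => ‖u s‖ ^ 2) = fun s => (u s).re ^ 2 + (u s).im ^ 2 := by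
      funext s
      rw [Complex.sq_norm, Complex.normSq_apply]
      ring
    rw [heq]
    convert key using 1
    have hre : ((c : ℂ) * u r).re = c * (u r).re := by simp
    have him : ((c : ℂ) * u r).im = c * (u r).im := by simp
    rw [hre, him, Complex.sq_norm, Complex.normSq_apply]
    ring
  have hH : ∀ r ∈ Set.Ioi (0:ℝ),
      HasDerivAt h (2 * r * (1 + (m : ℝ) + Atheta u r) * ‖u r‖ ^ 2) r := by
    intro r hr
    have hr0 : (0:ℝ) < r := hr
    have h1 : HasDerivAt (fun s : ℝ => s ^ 2) (2 * r) r := by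
      simpa using (hasDerivAt_pow 2 r)
    have := h1.mul (hF r hr)
    refine this.congr_deriv ?_
    field_simp
    ring
  have hanti : AntitoneOn h (Set.Ioi (0:ℝ)) := by
    apply antitoneOn_of_deriv_nonpos (convex_Ioi 0)
    · intro r hr
      exact ((hH r hr).differentiableAt).continuousAt.continuousWithinAt
    · rw [interior_Ioi]
      intro r hr
      exact ((hH r hr).differentiableAt).differentiableWithinAt
    · rw [interior_Ioi]
      intro r hr
      rw [(hH r hr).deriv]
      have hr0 : (0:ℝ) < r := hr
      have hA : Atheta u r ≤ 0 := Atheta_nonpos u r hr0.le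
      have hm1 : (m : ℝ) ≤ -1 := by
        have : m ≤ -1 := by omega
        exact_mod_cast this
      have : 1 + (m : ℝ) + Atheta u r ≤ 0 := by linarith
      have h2 : (0:ℝ) ≤ ‖u r‖ ^ 2 := by positivity
      have t1 : 2 * r * (1 + (m:ℝ) + Atheta u r) ≤ 0 :=
        mul_nonpos_iff.mpr (Or.inl ⟨by linarith, this⟩)
      exact mul_nonpos_iff.mpr (Or.inr ⟨t1, h2⟩)
  -- suppose u r₀ ≠ 0
  intro r₀ hr₀
  by_contra hne
  have hr0 : (0:ℝ) < r₀ := hr₀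
  have hK : 0 < h r₀ := by
    have : 0 < ‖u r₀‖ := norm_pos_iff.mpr hne
    have : 0 < ‖u r₀‖ ^ 2 := by positivity
    simp only [hh]
    positivity
  set K := h r₀ with hKdef
  -- lower bound: for x ∈ Ioc 0 r₀, ‖u x‖^2 * x ≥ K / x
  have hlow : ∀ x ∈ Set.Ioo (0:ℝ) r₀, K * x⁻¹ ≤ ‖u x‖ ^ 2 * x := by
    intro x hx
    have hx0 : (0:ℝ) < x := hx.1
    have hhx : K ≤ h x := hanti (Set.mem_Ioi.mpr hx0) hr₀ hx.2.le
    have : h x = (‖u x‖ ^ 2 * x) * x := by simp only [hh]; ring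
    rw [this] at hhx
    have hxi : 0 < x⁻¹ := by positivity
    calc K * x⁻¹ ≤ ((‖u x‖ ^ 2 * x) * x) * x⁻¹ := by
          apply mul_le_mul_of_nonneg_right hhx hxi.le
      _ = ‖u x‖ ^ 2 * x := by field_simp
  -- x⁻¹ would be integrable on Ioo 0 r₀: contradiction
  have hmass' : IntegrableOn (fun x => ‖u x‖ ^ 2 * x) (Set.Ioo (0:ℝ) r₀) :=
    hmass.mono_set (fun x hx => hx.1)
  have hint : IntegrableOn (fun x : ℝ => x ^ (-1 : ℝ)) (Set.Ioo (0:ℝ) r₀) := by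
    have : IntegrableOn (fun x : ℝ => K⁻¹ * (‖u x‖ ^ 2 * x)) (Set.Ioo (0:ℝ) r₀) :=
      hmass'.const_mul _
    apply Integrable.mono' this
    · apply ContinuousOn.aestronglyMeasurable _ measurableSet_Ioo
      intro x hx
      exact (Real.continuousAt_rpow_const x _ (Or.inl (ne_of_gt hx.1))).continuousWithinAt
    · filter_upwards [ae_restrict_mem measurableSet_Ioo] with x hx
      have hx0 : (0:ℝ) < x := hx.1
      rw [Real.rpow_neg_one, Real.norm_eq_abs, abs_of_pos (by positivity)]
      have := hlow x hx
      calc x⁻¹ = K⁻¹ * (K * x⁻¹) := by field_simp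
        _ ≤ K⁻¹ * (‖u x‖ ^ 2 * x) := by
            apply mul_le_mul_of_nonneg_left this (by positivity)
  rw [intervalIntegral.integrableOn_Ioo_rpow_iff hr0] at hint
  linarith
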